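/- Fix q ∈ (0,1), β ∈ [0,∞), γ ∈ (0,∞), ζ ∈ (0, (min{q,1−q})^{1/(β+1)}/γ), and τ ∈ (0, min{q,1−q} − (γζ)^{β+1}]. Let F be the CDF of a (β,γ,ζ)-clustered probability distribution on [0,∞) with finite mean satisfying F(a*−ζ) ≥ τ and F(a*+ζ) ≤ 1−τ, and let â be the SAA decision based on n IID samples from F. For any δ ∈ (0,1), if n > log(2/δ)/(2(γζ)^{2β+2}), then with probability at least 1−δ, the multiplicative regret satisfies (L(â) − L(a*))/L(a*) ≤ (1/(γζτ))·(log(2/δ)/(2n))^{(β+2)/(2β+2)}. -/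

import Mathlib

open MeasureTheory Set

noncomputable section

/-- The Newsvendor loss `ℓ(a,Z) = q·max{Z−a,0} + (1−q)·max{a−Z,0}` with critical quantile `q`. -/
def nvLoss (q a z : ℝ) : ℝ := q * max (z - a) 0 + (1 - q) * max (a - z) 0

/-- The expected Newsvendor loss `L(a)` under the demand distribution `μ`. -/
def expLoss (q : ℝ) (μ : Measure ℝ) (a : ℝ) : ℝ := ∫ z, nvLoss q a z ∂μ

/-- The CDF of the demand distribution `μ`. -/
def cdf' (μ : Measure ℝ) (z : ℝ) : ℝ := (μ (Iic z)).toReal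

/-- The optimal decision `a* = inf {a ≥ 0 : F(a) ≥ q}`. -/
def optDec (q : ℝ) (μ : Measure ℝ) : ℝ := sInf {a : ℝ | 0 ≤ a ∧ q ≤ cdf' μ a}

/-- The empirical CDF of the samples `ω : Fin n → ℝ`. -/
def empCdf (n : ℕ) (ω : Fin n → ℝ) (z : ℝ) : ℝ :=
  (∑ i : Fin n, if ω i ≤ z then (1 : ℝ) else 0) / n

/-- The SAA (sample average approximation) decision `â = inf {a ≥ 0 : F̂(a) ≥ q}`. -/
def saa (q : ℝ) (n : ℕ) (ω : Fin n → ℝ) : ℝ := sInf {a : ℝ | 0 ≤ a ∧ q ≤ empCdf n ω a}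

/-- The joint law of `n` iid samples from `μ`. -/
def iid (μ : Measure ℝ) (n : ℕ) : Measure (Fin n → ℝ) := Measure.pi fun _ => μ

/-- A distribution `μ` is `(β,γ,ζ)`-clustered if
`|a − a*| ≤ (1/γ)·|F(a) − q|^{1/(β+1)}` for all `a ∈ [a*−ζ, a*+ζ]`. -/
def Clustered (q β γ ζ : ℝ) (μ : Measure ℝ) : Prop :=
  ∀ a ∈ Icc (optDec q μ - ζ) (optDec q μ + ζ),
    |a - optDec q μ| ≤ (1 / γ) * |cdf' μ a - q| ^ ((1 : ℝ) / (β + 1))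

/-! ### Auxiliary lemmas -/

set_option linter.unusedSectionVars false

/-- Hoeffding's lemma for a Bernoulli variable: `1 - p + p e^x ≤ e^{px + x²/8}`. -/
lemma bernoulli_mgf_le {p : ℝ} (hp0 : 0 ≤ p) (hp1 : p ≤ 1) (x : ℝ) :
    1 - p + p * Real.exp x ≤ Real.exp (p * x + x ^ 2 / 8) := by
  set D : ℝ → ℝ := fun y => 1 - p + p * Real.exp y with hD
  have hDpos : ∀ y, 0 < D y := by
    intro y
    rcases eq_or_lt_of_le hp0 with h | h
    · simp [hD, ← h]
    · have h2 := Real.exp_pos y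
      have : 0 < p * Real.exp y := mul_pos h h2
      simp only [hD]
      nlinarith
  set g : ℝ → ℝ := fun y => y ^ 2 / 8 + p * y - Real.log (D y) with hg
  have hDderiv : ∀ y, HasDerivAt D (p * Real.exp y) y := by
    intro y
    exact ((Real.hasDerivAt_exp y).const_mul p).const_add (1 - p)
  set g' : ℝ → ℝ := fun y => y / 4 + p - p * Real.exp y / D y with hg'
  have hgderiv : ∀ y, HasDerivAt g (g' y) y := by
    intro y
    have h1 : HasDerivAt (fun y => y ^ 2 / 8 + p * y) (y / 4 + p) y := by
      have := ((hasDerivAt_pow 2 y).div_const 8).add ((hasDerivAt_id y).const_mul p)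
      refine this.congr_deriv ?_
      ring
    have h2 : HasDerivAt (fun y => Real.log (D y)) (p * Real.exp y / D y) y :=
      (hDderiv y).log (hDpos y).ne'
    exact h1.sub h2
  have hg'deriv : ∀ y, HasDerivAt g' (1 / 4 - p * Real.exp y * (1 - p) / (D y) ^ 2) y := by
    intro y
    have h1 : HasDerivAt (fun y => y / 4 + p) (1 / 4) y := by
      simpa using (hasDerivAt_id y).div_const 4 |>.add_const p
    have h2 : HasDerivAt (fun y => p * Real.exp y / D y)
        ((p * Real.exp y * D y - p * Real.exp y * (p * Real.exp y)) / (D y) ^ 2) y :=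
      ((Real.hasDerivAt_exp y).const_mul p).div (hDderiv y) (hDpos y).ne'
    have h3 := h1.sub h2
    refine h3.congr_deriv ?_
    have : D y ≠ 0 := (hDpos y).ne'
    field_simp [hD]
    ring
  have hg''nonneg : ∀ y, 0 ≤ 1 / 4 - p * Real.exp y * (1 - p) / (D y) ^ 2 := by
    intro y
    have hDy := hDpos y
    rw [sub_nonneg, div_le_iff₀ (by positivity)]
    have hDeq : D y = (1 - p) + p * Real.exp y := by simp only [hD]
    nlinarith [sq_nonneg ((1 - p) - p * Real.exp y)]
  have hg'mono : Monotone g' := by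
    have hdiff : Differentiable ℝ g' := fun y => (hg'deriv y).differentiableAt
    apply monotone_of_deriv_nonneg hdiff
    intro y
    rw [(hg'deriv y).deriv]
    exact hg''nonneg y
  have hg'zero : g' 0 = 0 := by
    have : D 0 = 1 := by simp [hD]
    simp [hg', this]
  have hgdiff : Differentiable ℝ g := fun y => (hgderiv y).differentiableAt
  have hgzero : g 0 = 0 := by
    have : D 0 = 1 := by simp [hD]
    simp [hg, this]
  have key : 0 ≤ g x := by
    rcases le_total 0 x with hx | hx
    · have hmono : MonotoneOn g (Set.Ici 0) := by
        apply monotoneOn_of_deriv_nonneg (convex_Ici 0) hgdiff.continuous.continuousOn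
          (fun y _ => (hgdiff y).differentiableWithinAt)
        intro y hy
        rw [(hgderiv y).deriv]
        rw [interior_Ici] at hy
        have := hg'mono (le_of_lt hy)
        rw [hg'zero] at this
        exact this
      have := hmono (Set.self_mem_Ici) (Set.mem_Ici.mpr hx) hx
      rwa [hgzero] at this
    · have hanti : AntitoneOn g (Set.Iic 0) := by
        apply antitoneOn_of_deriv_nonpos (convex_Iic 0) hgdiff.continuous.continuousOn
          (fun y _ => (hgdiff y).differentiableWithinAt)
        intro y hy
        rw [(hgderiv y).deriv]
        rw [interior_Iic] at hy
        have := hg'mono (le_of_lt hy)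
        rw [hg'zero] at this
        exact this
      have := hanti (Set.mem_Iic.mpr hx) Set.self_mem_Iic hx
      rwa [hgzero] at this
  have hlog : Real.log (D x) ≤ p * x + x ^ 2 / 8 := by
    have hx2 : Real.log (D x) ≤ x ^ 2 / 8 + p * x := by
      have := key; simp only [hg] at this; linarith
    linarith
  calc 1 - p + p * Real.exp x = D x := by simp [hD]
    _ ≤ Real.exp (p * x + x ^ 2 / 8) := by
        rw [← Real.exp_log (hDpos x)]
        exact Real.exp_le_exp.mpr hlog

lemma iid_integral_prod_pow (μ : Measure ℝ) [IsProbabilityMeasure μ] (n : ℕ) (f : ℝ → ℝ) :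
    ∫ ω, ∏ i : Fin n, f (ω i) ∂(iid μ n) = (∫ z, f z ∂μ) ^ n := by
  letI : MeasureSpace ℝ := ⟨μ⟩
  have h : iid μ n = (volume : Measure (Fin n → ℝ)) := by
    rw [iid, MeasureTheory.volume_pi]; rfl
  rw [h]
  have := MeasureTheory.integral_fintype_prod_eq_pow (𝕜 := ℝ) (ι := Fin n) f (μ := μ)
  simp only [Fintype.card_fin] at this
  exact this

lemma iid_integrable_prod (μ : Measure ℝ) [IsProbabilityMeasure μ] (n : ℕ) (f : ℝ → ℝ)
    (hf : Integrable f μ) :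
    Integrable (fun ω : Fin n → ℝ => ∏ i : Fin n, f (ω i)) (iid μ n) := by
  letI : MeasureSpace ℝ := ⟨μ⟩
  have h : iid μ n = (volume : Measure (Fin n → ℝ)) := by
    rw [iid, MeasureTheory.volume_pi]; rfl
  rw [h]
  exact MeasureTheory.Integrable.fintype_prod (𝕜 := ℝ) (fun _ => hf)

/-- One-sided Chernoff–Hoeffding bound for the empirical frequency of a set. -/
lemma chernoff_upper (μ : Measure ℝ) [IsProbabilityMeasure μ] {A : Set ℝ}
    (hA : MeasurableSet A) (n : ℕ) {t : ℝ} (ht : 0 < t) :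
    (iid μ n) {ω | (n : ℝ) * ((μ A).toReal + t) ≤ ∑ i, A.indicator (fun _ => (1:ℝ)) (ω i)}
      ≤ ENNReal.ofReal (Real.exp (-(2 * n * t ^ 2))) := by
  haveI : IsProbabilityMeasure (iid μ n) := by rw [iid]; infer_instance
  set p : ℝ := (μ A).toReal with hp
  have hp0 : 0 ≤ p := ENNReal.toReal_nonneg
  have hp1 : p ≤ 1 := by
    rw [hp]
    exact ENNReal.toReal_le_of_le_ofReal zero_le_one (by simpa using prob_le_one (μ := μ) (s := A))
  set c₁ : ℝ := Real.exp (4 * t * (1 - (p + t))) with hc₁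
  set c₂ : ℝ := Real.exp (4 * t * (0 - (p + t))) with hc₂
  set f : ℝ → ℝ := fun z => Real.exp (4 * t * (A.indicator (fun _ => (1:ℝ)) z - (p + t))) with hf
  have hfeq : f = fun z => A.indicator (fun _ => c₁) z + Aᶜ.indicator (fun _ => c₂) z := by
    funext z
    by_cases hz : z ∈ A <;>
      simp [hf, hc₁, hc₂, Set.indicator_apply, hz]
  have hf_int : Integrable f μ := by
    rw [hfeq]
    exact ((integrable_const c₁).indicator hA).add ((integrable_const c₂).indicator hA.compl)
  have hint_f : ∫ z, f z ∂μ = c₁ * p + c₂ * (1 - p) := by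
    rw [hfeq]
    rw [integral_add ((integrable_const c₁).indicator hA) ((integrable_const c₂).indicator hA.compl)]
    rw [integral_indicator_const _ hA, integral_indicator_const _ hA.compl]
    have hcompl : (μ Aᶜ).toReal = 1 - p := by
      rw [measure_compl hA (measure_ne_top μ A), measure_univ]
      rw [ENNReal.toReal_sub_of_le prob_le_one ENNReal.one_ne_top]
      simp [hp]
    rw [show μ.real Aᶜ = 1 - p from hcompl]
    simp [hp, smul_eq_mul, measureReal_def]
    ring
  have hmgf : ∫ z, f z ∂μ ≤ Real.exp (-(2 * t ^ 2)) := by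
    have h1 : c₁ * p + c₂ * (1 - p) = c₂ * (1 - p + p * Real.exp (4 * t)) := by
      rw [hc₁, hc₂]
      rw [show 4 * t * (1 - (p + t)) = 4 * t * (0 - (p + t)) + 4 * t by ring, Real.exp_add]
      ring
    have h2 := bernoulli_mgf_le hp0 hp1 (4 * t)
    have h3 : c₂ * (1 - p + p * Real.exp (4 * t))
        ≤ c₂ * Real.exp (p * (4 * t) + (4 * t) ^ 2 / 8) := by
      apply mul_le_mul_of_nonneg_left h2 (Real.exp_nonneg _)
    rw [hint_f, h1]
    refine h3.trans ?_
    rw [hc₂, ← Real.exp_add]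
    apply Real.exp_le_exp.mpr
    nlinarith [sq_nonneg t]
  set g : (Fin n → ℝ) → ℝ := fun ω => ∏ i : Fin n, f (ω i) with hg
  have hg_nonneg : ∀ ω, 0 ≤ g ω := fun ω => Finset.prod_nonneg fun i _ => Real.exp_nonneg _
  have hg_int : Integrable g (iid μ n) := iid_integrable_prod μ n f hf_int
  have hsub : {ω : Fin n → ℝ | (n : ℝ) * (p + t) ≤ ∑ i, A.indicator (fun _ => (1:ℝ)) (ω i)}
      ⊆ {ω | (1:ℝ) ≤ g ω} := by
    intro ω hω
    simp only [mem_setOf_eq] at hω ⊢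
    have heq : g ω = Real.exp (4 * t * ((∑ i, A.indicator (fun _ => (1:ℝ)) (ω i)) - n * (p + t))) := by
      simp only [hg, hf, ← Real.exp_sum]
      congr 1
      simp only [mul_sub, Finset.sum_sub_distrib, Finset.sum_const, Finset.card_univ,
        Fintype.card_fin, nsmul_eq_mul, ← Finset.mul_sum]
      ring
    rw [show (1:ℝ) = Real.exp 0 by simp, heq]
    apply Real.exp_le_exp.mpr
    have h4 : 0 ≤ (∑ i, A.indicator (fun _ => (1:ℝ)) (ω i)) - n * (p + t) := by linarith
    positivity
  have hmarkov := mul_meas_ge_le_integral_of_nonneg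
    (ae_of_all _ hg_nonneg) hg_int 1
  have hintg : ∫ ω, g ω ∂(iid μ n) = (∫ z, f z ∂μ) ^ n := iid_integral_prod_pow μ n f
  have hbound : ((iid μ n) {ω | (1:ℝ) ≤ g ω}).toReal ≤ Real.exp (-(2 * ↑n * t ^ 2)) := by
    have h5 : (∫ z, f z ∂μ) ^ n ≤ Real.exp (-(2 * t ^ 2)) ^ n := by
      apply pow_le_pow_left₀ (integral_nonneg fun z => Real.exp_nonneg _) hmgf
    have h6 : Real.exp (-(2 * t ^ 2)) ^ n = Real.exp (-(2 * ↑n * t ^ 2)) := by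
      rw [← Real.exp_nat_mul]
      ring_nf
    calc ((iid μ n) {ω | (1:ℝ) ≤ g ω}).toReal
        = 1 * ((iid μ n) {ω | (1:ℝ) ≤ g ω}).toReal := by ring
      _ ≤ ∫ ω, g ω ∂(iid μ n) := hmarkov
      _ = (∫ z, f z ∂μ) ^ n := hintg
      _ ≤ Real.exp (-(2 * ↑n * t ^ 2)) := by rw [← h6]; exact h5
  calc (iid μ n) {ω | (n : ℝ) * (p + t) ≤ ∑ i, A.indicator (fun _ => (1:ℝ)) (ω i)}
      ≤ (iid μ n) {ω | (1:ℝ) ≤ g ω} := measure_mono hsub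
    _ ≤ ENNReal.ofReal (Real.exp (-(2 * ↑n * t ^ 2))) := by
        rw [ENNReal.le_ofReal_iff_toReal_le (measure_ne_top _ _) (Real.exp_nonneg _)]
        exact hbound

section CdfFacts

variable {μ : Measure ℝ} [IsProbabilityMeasure μ]

lemma cdf'_eq : cdf' μ = ⇑(ProbabilityTheory.cdf μ) :=
  funext fun x => (ProbabilityTheory.cdf_eq_real μ x).symm

lemma cdf'_mono : Monotone (cdf' μ) := by
  rw [cdf'_eq]; exact ProbabilityTheory.monotone_cdf μ

lemma cdf'_nonneg (x : ℝ) : 0 ≤ cdf' μ x := ENNReal.toReal_nonneg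

lemma cdf'_le_one (x : ℝ) : cdf' μ x ≤ 1 := by
  rw [cdf'_eq]; exact ProbabilityTheory.cdf_le_one μ x

lemma cdf'_right_limit {x r : ℝ} (h : ∀ u, x < u → r ≤ cdf' μ u) : r ≤ cdf' μ x := by
  rw [cdf'_eq] at h ⊢
  have hc : ContinuousWithinAt (ProbabilityTheory.cdf μ) (Ioi x) x :=
    ((ProbabilityTheory.cdf μ).right_continuous x).mono Ioi_subset_Ici_self
  refine ge_of_tendsto hc ?_
  filter_upwards [self_mem_nhdsWithin] with u hu
  exact h u hu

lemma measure_Iio_toReal_le {x r : ℝ} (hr : 0 ≤ r) (h : ∀ u, u < x → cdf' μ u ≤ r) :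
    (μ (Iio x)).toReal ≤ r := by
  have hU : Iio x = ⋃ k : ℕ, Iic (x - 1 / (k + 1)) := by
    ext z
    simp only [mem_Iio, mem_iUnion, mem_Iic]
    constructor
    · intro hz
      obtain ⟨k, hk⟩ := exists_nat_one_div_lt (sub_pos.mpr hz)
      exact ⟨k, by push_cast at hk ⊢; linarith⟩
    · rintro ⟨k, hk⟩
      have : 0 < 1 / ((k : ℝ) + 1) := by positivity
      linarith
  have hmono : Monotone fun k : ℕ => Iic (x - 1 / ((k : ℝ) + 1)) := by
    intro a b hab
    apply Iic_subset_Iic.mpr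
    have : (1:ℝ) / (b + 1) ≤ 1 / (a + 1) := by
      apply one_div_le_one_div_of_le (by positivity)
      exact_mod_cast by omega
    linarith
  rw [hU, hmono.directed_le.measure_iUnion]
  apply ENNReal.toReal_le_of_le_ofReal hr
  apply iSup_le
  intro k
  have hpos : (0:ℝ) < 1 / ((k:ℝ) + 1) := by positivity
  have := h (x - 1 / (k + 1)) (by linarith)
  rw [cdf'] at this
  exact ENNReal.le_ofReal_iff_toReal_le (measure_ne_top _ _) hr |>.mpr this

lemma cdf'_neg_eq_zero (hsupp : μ (Iio 0) = 0) {u : ℝ} (hu : u < 0) : cdf' μ u = 0 := by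
  rw [cdf']
  have : μ (Iic u) = 0 := measure_mono_null (fun z hz => lt_of_le_of_lt hz hu) hsupp
  simp [this]

end CdfFacts

lemma nvLoss_eq (q a z : ℝ) : nvLoss q a z = q * (z - a) + max (a - z) 0 := by
  unfold nvLoss
  rcases le_total z a with h | h
  · rw [max_eq_right (by linarith), max_eq_left (by linarith)]; ring
  · rw [max_eq_left (by linarith), max_eq_right (by linarith)]; ring

lemma nvLoss_integrable {q a : ℝ} {μ : Measure ℝ} [IsProbabilityMeasure μ]
    (hmean : Integrable (fun z => z) μ) : Integrable (fun z => nvLoss q a z) μ := by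
  unfold nvLoss
  apply Integrable.add
  · exact ((hmean.sub (integrable_const a)).pos_part).const_mul q
  · exact (((integrable_const a).sub hmean).pos_part).const_mul (1 - q)

lemma nvLoss_diff_le_right {q a b z : ℝ} (hab : a ≤ b) :
    nvLoss q b z - nvLoss q a z ≤ (b - a) * ((Iio b).indicator (fun _ => (1:ℝ)) z - q) := by
  rw [nvLoss_eq, nvLoss_eq]
  rcases lt_or_ge z b with hz | hz
  · simp only [indicator_apply, mem_Iio, hz, if_pos]
    rcases le_total z a with hza | hza
    · rw [max_eq_left (by linarith), max_eq_left (by linarith)]; nlinarith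
    · rw [max_eq_left (by linarith), max_eq_right (by linarith)]; nlinarith
  · simp only [indicator_apply, mem_Iio, not_lt.mpr hz, if_false]
    rw [max_eq_right (by linarith), max_eq_right (by linarith)]
    norm_num
    nlinarith

lemma nvLoss_diff_le_left {q a b z : ℝ} (hab : b ≤ a) :
    nvLoss q b z - nvLoss q a z ≤ (a - b) * (q - (Iic b).indicator (fun _ => (1:ℝ)) z) := by
  rw [nvLoss_eq, nvLoss_eq]
  rcases le_or_gt z b with hz | hz
  · simp only [indicator_apply, mem_Iic, hz, if_pos]
    rw [max_eq_left (by linarith), max_eq_left (by linarith)]; nlinarith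
  · simp only [indicator_apply, mem_Iic, not_le.mpr hz, if_false]
    rcases le_total z a with hza | hza
    · rw [max_eq_right (by linarith), max_eq_left (by linarith)]; norm_num; nlinarith
    · rw [max_eq_right (by linarith), max_eq_right (by linarith)]; norm_num; nlinarith

lemma expLoss_diff_le_right {q a b : ℝ} {μ : Measure ℝ} [IsProbabilityMeasure μ]
    (hmean : Integrable (fun z => z) μ) (hab : a ≤ b) :
    expLoss q μ b - expLoss q μ a ≤ (b - a) * ((μ (Iio b)).toReal - q) := by
  rw [expLoss, expLoss, ← integral_sub (nvLoss_integrable hmean) (nvLoss_integrable hmean)]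
  have hbnd : Integrable (fun z => (b - a) * ((Iio b).indicator (fun _ => (1:ℝ)) z - q)) μ :=
    ((((integrable_const (1:ℝ)).indicator measurableSet_Iio).sub (integrable_const q)).const_mul _)
  calc ∫ z, (nvLoss q b z - nvLoss q a z) ∂μ
      ≤ ∫ z, (b - a) * ((Iio b).indicator (fun _ => (1:ℝ)) z - q) ∂μ := by
        apply integral_mono ((nvLoss_integrable hmean).sub (nvLoss_integrable hmean)) hbnd
        intro z
        exact nvLoss_diff_le_right hab
    _ = (b - a) * ((μ (Iio b)).toReal - q) := by
        rw [integral_const_mul]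
        congr 1
        rw [integral_sub ((integrable_const (1:ℝ)).indicator measurableSet_Iio)
          (integrable_const q)]
        rw [integral_indicator_const _ measurableSet_Iio, integral_const]
        simp [measureReal_def]

lemma expLoss_diff_le_left {q a b : ℝ} {μ : Measure ℝ} [IsProbabilityMeasure μ]
    (hmean : Integrable (fun z => z) μ) (hab : b ≤ a) :
    expLoss q μ b - expLoss q μ a ≤ (a - b) * (q - cdf' μ b) := by
  rw [expLoss, expLoss, ← integral_sub (nvLoss_integrable hmean) (nvLoss_integrable hmean)]
  have hbnd : Integrable (fun z => (a - b) * (q - (Iic b).indicator (fun _ => (1:ℝ)) z)) μ :=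
    (((integrable_const q).sub ((integrable_const (1:ℝ)).indicator measurableSet_Iic)).const_mul _)
  calc ∫ z, (nvLoss q b z - nvLoss q a z) ∂μ
      ≤ ∫ z, (a - b) * (q - (Iic b).indicator (fun _ => (1:ℝ)) z) ∂μ := by
        apply integral_mono ((nvLoss_integrable hmean).sub (nvLoss_integrable hmean)) hbnd
        intro z
        exact nvLoss_diff_le_left hab
    _ = (a - b) * (q - cdf' μ b) := by
        rw [integral_const_mul]
        congr 1
        rw [integral_sub (integrable_const q)
          ((integrable_const (1:ℝ)).indicator measurableSet_Iic)]
        rw [integral_indicator_const _ measurableSet_Iic, integral_const]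
        simp [cdf', measureReal_def]

lemma expLoss_lower {q ζ τ astar : ℝ} {μ : Measure ℝ} [IsProbabilityMeasure μ]
    (hmean : Integrable (fun z => z) μ) (hq0 : 0 ≤ q) (hq1 : q ≤ 1) (hζ : 0 < ζ) (hτ : 0 < τ)
    (hlo : τ ≤ cdf' μ (astar - ζ)) (hhi : cdf' μ (astar + ζ) ≤ 1 - τ) :
    ζ * τ ≤ expLoss q μ astar := by
  set h : ℝ → ℝ := fun z => (q * ζ) * (Ioi (astar + ζ)).indicator (fun _ => (1:ℝ)) z
    + ((1 - q) * ζ) * (Iic (astar - ζ)).indicator (fun _ => (1:ℝ)) z with hh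
  have hint : Integrable h μ :=
    (((integrable_const (1:ℝ)).indicator measurableSet_Ioi).const_mul _).add
      (((integrable_const (1:ℝ)).indicator measurableSet_Iic).const_mul _)
  have hpt : ∀ z, h z ≤ nvLoss q astar z := by
    intro z
    rw [hh, nvLoss]
    simp only [indicator_apply, mem_Ioi, mem_Iic]
    split_ifs with h1 h2 h2
    · linarith
    · have : ζ ≤ z - astar := by linarith
      have h3 : max (z - astar) 0 = z - astar := max_eq_left (by linarith)
      have h4 : (0:ℝ) ≤ max (astar - z) 0 := le_max_right _ _
      nlinarith
    · have : ζ ≤ astar - z := by linarith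
      have h3 : max (astar - z) 0 = astar - z := max_eq_left (by linarith)
      have h4 : (0:ℝ) ≤ max (z - astar) 0 := le_max_right _ _
      nlinarith
    · have h3 : (0:ℝ) ≤ max (z - astar) 0 := le_max_right _ _
      have h4 : (0:ℝ) ≤ max (astar - z) 0 := le_max_right _ _
      nlinarith
  have hih : ∫ z, h z ∂μ = (q * ζ) * (μ (Ioi (astar + ζ))).toReal
      + ((1 - q) * ζ) * cdf' μ (astar - ζ) := by
    rw [hh, integral_add (((integrable_const (1:ℝ)).indicator measurableSet_Ioi).const_mul _)
      (((integrable_const (1:ℝ)).indicator measurableSet_Iic).const_mul _),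
      integral_const_mul, integral_const_mul, integral_indicator_const _ measurableSet_Ioi,
      integral_indicator_const _ measurableSet_Iic]
    simp [cdf', measureReal_def]
  have hIoi : τ ≤ (μ (Ioi (astar + ζ))).toReal := by
    have hc : μ (Ioi (astar + ζ)) = 1 - μ (Iic (astar + ζ)) := by
      rw [← compl_Iic, measure_compl measurableSet_Iic (measure_ne_top μ _), measure_univ]
    rw [hc, ENNReal.toReal_sub_of_le prob_le_one ENNReal.one_ne_top]
    have heq : (μ (Iic (astar + ζ))).toReal = cdf' μ (astar + ζ) := rfl
    rw [heq]
    simp only [ENNReal.toReal_one]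
    linarith
  calc ζ * τ = (q * ζ) * τ + ((1 - q) * ζ) * τ := by ring
    _ ≤ (q * ζ) * (μ (Ioi (astar + ζ))).toReal + ((1 - q) * ζ) * cdf' μ (astar - ζ) := by
        apply add_le_add
        · exact mul_le_mul_of_nonneg_left hIoi (mul_nonneg hq0 hζ.le)
        · exact mul_le_mul_of_nonneg_left hlo (mul_nonneg (by linarith) hζ.le)
    _ = ∫ z, h z ∂μ := hih.symm
    _ ≤ expLoss q μ astar := integral_mono hint (nvLoss_integrable hmean) hpt

set_option maxHeartbeats 1600000 in
/-- High-probability multiplicative regret upper bound for SAA on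
`(β,γ,ζ)`-clustered distributions with `F(a*−ζ) ≥ τ` and `F(a*+ζ) ≤ 1−τ`:
if `n > log(2/δ)/(2(γζ)^{2β+2})`, then with probability at least `1−δ`,
`(L(â) − L(a*))/L(a*) ≤ (1/(γζτ))·(log(2/δ)/(2n))^{(β+2)/(2β+2)}`. -/
theorem saa_high_prob_multiplicative_regret_clustered
    (q β γ ζ τ : ℝ) (hq : q ∈ Ioo (0:ℝ) 1) (hβ : 0 ≤ β) (hγ : 0 < γ)
    (hζ : ζ ∈ Ioo 0 ((min q (1 - q)) ^ ((1:ℝ)/(β+1)) / γ))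
    (hτ : τ ∈ Ioc 0 (min q (1 - q) - (γ*ζ) ^ (β+1)))
    (μ : Measure ℝ) [IsProbabilityMeasure μ] (hsupp : μ (Iio 0) = 0)
    (hmean : Integrable (fun z => z) μ)
    (hclus : Clustered q β γ ζ μ)
    (hlo : τ ≤ cdf' μ (optDec q μ - ζ)) (hhi : cdf' μ (optDec q μ + ζ) ≤ 1 - τ)
    (n : ℕ) (δ : ℝ) (hδ : δ ∈ Ioo (0:ℝ) 1)
    (hn : Real.log (2/δ) / (2 * (γ*ζ) ^ (2*β+2)) < n) :
    ENNReal.ofReal (1 - δ) ≤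
      (iid μ n) {ω |
        (expLoss q μ (saa q n ω) - expLoss q μ (optDec q μ)) / expLoss q μ (optDec q μ)
          ≤ (1/(γ*ζ*τ)) * (Real.log (2/δ) / (2*n)) ^ ((β+2)/(2*β+2))} := by
  obtain ⟨hq0, hq1⟩ := hq
  obtain ⟨hζ0, hζub⟩ := hζ
  obtain ⟨hτ0, hτub⟩ := hτ
  obtain ⟨hδ0, hδ1⟩ := hδ
  haveI : IsProbabilityMeasure (iid μ n) := by rw [iid]; infer_instance
  set astar := optDec q μ with hastar_def
  have hβ1 : (0:ℝ) < β + 1 := by linarith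
  have hmin : 0 < min q (1 - q) := lt_min hq0 (by linarith)
  have hγζ : 0 < γ * ζ := mul_pos hγ hζ0
  have hγζpow : 0 < (γ*ζ) ^ (β+1) := Real.rpow_pos_of_pos hγζ _
  have hγζpow2 : 0 < (γ*ζ) ^ (2*β+2) := Real.rpow_pos_of_pos hγζ _
  have hlog : 0 < Real.log (2/δ) := Real.log_pos (by rw [lt_div_iff₀ hδ0]; linarith)
  have hn0' : (0:ℝ) < n := lt_trans (div_pos hlog (by positivity)) hn
  have hn0 : 0 < n := by exact_mod_cast hn0'
  set t := Real.sqrt (Real.log (2/δ) / (2*n)) with ht_def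
  have ht2 : t^2 = Real.log (2/δ) / (2*n) := Real.sq_sqrt (by positivity)
  have ht0 : 0 < t := Real.sqrt_pos.mpr (by positivity)
  have hpow_split : (γ*ζ) ^ (2*β+2) = ((γ*ζ) ^ (β+1))^2 := by
    rw [← Real.rpow_natCast ((γ*ζ) ^ (β+1)) 2, ← Real.rpow_mul hγζ.le]
    norm_num
    ring_nf
  have htlt : t < (γ*ζ) ^ (β+1) := by
    have h1 : t^2 < ((γ*ζ) ^ (β+1))^2 := by
      rw [ht2, ← hpow_split, div_lt_iff₀ (by positivity)]
      calc Real.log (2/δ)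
          = (Real.log (2/δ) / (2 * (γ*ζ)^(2*β+2))) * (2 * (γ*ζ)^(2*β+2)) := by field_simp
        _ < n * (2 * (γ*ζ)^(2*β+2)) := mul_lt_mul_of_pos_right hn (by positivity)
        _ = (γ*ζ)^(2*β+2) * (2*n) := by ring
    by_contra h
    push_neg at h
    have h2 := pow_le_pow_left₀ hγζpow.le h 2
    linarith
  have htmin : t < min q (1-q) := htlt.trans_le (by linarith)
  have htq : t < q := htmin.trans_le (min_le_left _ _)
  have ht1q : t < 1 - q := htmin.trans_le (min_le_right _ _)
  set ε := (1/γ) * t ^ ((1:ℝ)/(β+1)) with hε_def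
  have htpow0 : 0 < t ^ ((1:ℝ)/(β+1)) := Real.rpow_pos_of_pos ht0 _
  have hε0 : 0 < ε := by rw [hε_def]; positivity
  have hcollapse : ∀ x : ℝ, 0 ≤ x → (x ^ ((1:ℝ)/(β+1))) ^ (β+1) = x := by
    intro x hx
    rw [← Real.rpow_mul hx, one_div_mul_cancel hβ1.ne', Real.rpow_one]
  have hcollapse' : ∀ x : ℝ, 0 ≤ x → (x ^ (β+1)) ^ ((1:ℝ)/(β+1)) = x := by
    intro x hx
    rw [← Real.rpow_mul hx, mul_one_div_cancel hβ1.ne', Real.rpow_one]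
  have hγε : (γ * ε) ^ (β+1) = t := by
    have h : γ * ε = t ^ ((1:ℝ)/(β+1)) := by rw [hε_def]; field_simp
    rw [h, hcollapse t ht0.le]
  have hεζ : ε < ζ := by
    have h1 : t ^ ((1:ℝ)/(β+1)) < ((γ*ζ)^(β+1)) ^ ((1:ℝ)/(β+1)) :=
      Real.rpow_lt_rpow ht0.le htlt (by positivity)
    rw [hcollapse' (γ*ζ) hγζ.le] at h1
    calc ε = (1/γ) * t ^ ((1:ℝ)/(β+1)) := hε_def
      _ < (1/γ) * (γ*ζ) := mul_lt_mul_of_pos_left h1 (by positivity)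
      _ = ζ := by field_simp
  -- basic facts about the optimal decision
  have hSne : {a : ℝ | 0 ≤ a ∧ q ≤ cdf' μ a}.Nonempty := by
    have h1 : ∀ᶠ x in Filter.atTop, q ≤ ProbabilityTheory.cdf μ x :=
      (ProbabilityTheory.tendsto_cdf_atTop μ).eventually_const_le hq1
    obtain ⟨x0, hx0⟩ := h1.exists
    refine ⟨max 0 x0, le_max_left _ _, ?_⟩
    have h2 : cdf' μ x0 ≤ cdf' μ (max 0 x0) := cdf'_mono (le_max_right 0 x0)
    have h3 : q ≤ cdf' μ x0 := by rw [cdf'_eq]; exact hx0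
    linarith
  have hSbdd : BddBelow {a : ℝ | 0 ≤ a ∧ q ≤ cdf' μ a} := ⟨0, fun b hb => hb.1⟩
  have hastar_eq : astar = sInf {a : ℝ | 0 ≤ a ∧ q ≤ cdf' μ a} := rfl
  have hastar0 : 0 ≤ astar := by rw [hastar_eq]; exact le_csInf hSne fun b hb => hb.1
  have hFabove : ∀ u, astar < u → q ≤ cdf' μ u := by
    intro u hu
    rw [hastar_eq] at hu
    obtain ⟨b, hbS, hbu⟩ := exists_lt_of_csInf_lt hSne hu
    exact hbS.2.trans (cdf'_mono hbu.le)
  have hFastar : q ≤ cdf' μ astar := cdf'_right_limit hFabove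
  have hFbelow : ∀ u, 0 ≤ u → u < astar → cdf' μ u < q := by
    intro u hu0 hu
    by_contra h
    push_neg at h
    have := csInf_le hSbdd (show 0 ≤ u ∧ q ≤ cdf' μ u from ⟨hu0, h⟩)
    rw [← hastar_eq] at this
    exact absurd this (not_le.mpr hu)
  have hclus' : ∀ a ∈ Icc (astar - ζ) (astar + ζ),
      |a - astar| ≤ (1 / γ) * |cdf' μ a - q| ^ ((1 : ℝ) / (β + 1)) := hclus
  -- clustering: the cdf at astar + ε exceeds q + t
  have hkey_up : q + t ≤ cdf' μ (astar + ε) := by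
    have h1 := hclus' (astar + ε) ⟨by linarith, by linarith⟩
    rw [show astar + ε - astar = ε by ring, abs_of_pos hε0] at h1
    have h3 : γ * ε ≤ |cdf' μ (astar + ε) - q| ^ ((1:ℝ)/(β+1)) := by
      have := mul_le_mul_of_nonneg_left h1 hγ.le
      calc γ * ε ≤ γ * ((1/γ) * |cdf' μ (astar + ε) - q| ^ ((1:ℝ)/(β+1))) := this
        _ = |cdf' μ (astar + ε) - q| ^ ((1:ℝ)/(β+1)) := by field_simp
    have h4 : t ≤ |cdf' μ (astar + ε) - q| := by
      calc t = (γ*ε)^(β+1) := hγε.symm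
        _ ≤ (|cdf' μ (astar + ε) - q| ^ ((1:ℝ)/(β+1)))^(β+1) :=
            Real.rpow_le_rpow (by positivity) h3 hβ1.le
        _ = |cdf' μ (astar + ε) - q| := hcollapse _ (abs_nonneg _)
    have h5 : q ≤ cdf' μ (astar + ε) := hFabove _ (by linarith)
    rw [abs_of_nonneg (by linarith)] at h4
    linarith
  -- inverse clustering
  have hkey_inv : ∀ u, u ∈ Icc (astar - ζ) (astar + ζ) → |cdf' μ u - q| ≤ t →
      |u - astar| ≤ ε := by
    intro u hu hut
    calc |u - astar| ≤ (1/γ) * |cdf' μ u - q| ^ ((1:ℝ)/(β+1)) := hclus' u hu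
      _ ≤ (1/γ) * t ^ ((1:ℝ)/(β+1)) := by
          apply mul_le_mul_of_nonneg_left _ (by positivity)
          exact Real.rpow_le_rpow (abs_nonneg _) hut (by positivity)
      _ = ε := hε_def.symm
  -- the point c
  have hScne : astar + ε ∈ {u : ℝ | q + t ≤ cdf' μ u} := hkey_up
  have hScbdd : BddBelow {u : ℝ | q + t ≤ cdf' μ u} := by
    refine ⟨0, fun u hu => ?_⟩
    by_contra h
    push_neg at h
    rw [mem_setOf_eq, cdf'_neg_eq_zero hsupp h] at hu
    linarith
  set c := sInf {u : ℝ | q + t ≤ cdf' μ u} with hc_def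
  have hc_le : c ≤ astar + ε := csInf_le hScbdd hScne
  have hFltc : ∀ u, u < c → cdf' μ u < q + t := by
    intro u hu
    by_contra h
    push_neg at h
    exact absurd (csInf_le hScbdd h) (not_le.mpr hu)
  have hc0 : 0 ≤ c := by
    refine le_csInf ⟨_, hScne⟩ fun u hu => ?_
    by_contra h
    push_neg at h
    rw [mem_setOf_eq, cdf'_neg_eq_zero hsupp h] at hu
    linarith
  have hFc : q + t ≤ cdf' μ c := by
    apply cdf'_right_limit
    intro u hu
    obtain ⟨s, hs, hsu⟩ := exists_lt_of_csInf_lt ⟨_, hScne⟩ hu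
    exact hs.trans (cdf'_mono hsu.le)
  -- the point e
  have hSene : (-1:ℝ) ∈ {u : ℝ | cdf' μ u < q - t} := by
    rw [mem_setOf_eq, cdf'_neg_eq_zero hsupp (by norm_num)]
    linarith
  have hSebdd : BddAbove {u : ℝ | cdf' μ u < q - t} := by
    refine ⟨astar, fun u hu => ?_⟩
    by_contra h
    push_neg at h
    have := hFabove u h
    rw [mem_setOf_eq] at hu
    linarith
  set e := sSup {u : ℝ | cdf' μ u < q - t} with he_def
  have he_le : e ≤ astar := by
    apply csSup_le ⟨-1, hSene⟩
    intro u hu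
    by_contra h
    push_neg at h
    have := hFabove u h
    rw [mem_setOf_eq] at hu
    linarith
  have hFge : ∀ u, e < u → q - t ≤ cdf' μ u := by
    intro u hu
    by_contra h
    push_neg at h
    exact absurd (le_csSup hSebdd h) (not_le.mpr hu)
  have hFe : q - t ≤ cdf' μ e := cdf'_right_limit hFge
  have hIioe : (μ (Iio e)).toReal ≤ q - t := by
    apply measure_Iio_toReal_le (by linarith)
    intro u hu
    obtain ⟨s, hs, hus⟩ := exists_lt_of_lt_csSup ⟨-1, hSene⟩ hu
    exact (cdf'_mono hus.le).trans hs.le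
  -- denominator lower bound
  have hL : ζ * τ ≤ expLoss q μ astar := expLoss_lower hmean hq0.le hq1.le hζ0 hτ0 hlo hhi
  have hL0 : 0 < expLoss q μ astar := lt_of_lt_of_le (by positivity) hL
  -- RHS arithmetic
  have hRHS : ε * t / (ζ * τ) = 1/(γ*ζ*τ) * (Real.log (2/δ) / (2*n)) ^ ((β+2)/(2*β+2)) := by
    rw [← ht2]
    have h1 : (t^2) ^ ((β+2)/(2*β+2)) = t ^ ((β+2)/(β+1)) := by
      rw [← Real.rpow_natCast t 2, ← Real.rpow_mul ht0.le]
      congr 1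
      have h2β : (2:ℝ)*β+2 ≠ 0 := by positivity
      field_simp
      ring
    have h2 : t ^ ((1:ℝ)/(β+1)) * t = t ^ ((β+2)/(β+1)) := by
      nth_rewrite 2 [← Real.rpow_one t]
      rw [← Real.rpow_add ht0]
      congr 1
      field_simp
      ring
    rw [h1, ← h2, hε_def]
    field_simp
  -- Good event implies the target bound
  have hGoodTarget : ∀ ω : Fin n → ℝ, q ≤ empCdf n ω c →
      (∑ i, if ω i < e then (1:ℝ) else 0) < q * n →
      (expLoss q μ (saa q n ω) - expLoss q μ astar) / expLoss q μ astar
        ≤ 1/(γ*ζ*τ) * (Real.log (2/δ) / (2*n)) ^ ((β+2)/(2*β+2)) := by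
    intro ω hE1 hE2
    haveI : Nonempty (Fin n) := Fin.pos_iff_nonempty.mp hn0
    set b := saa q n ω with hb_def
    have hb_eq : b = sInf {a : ℝ | 0 ≤ a ∧ q ≤ empCdf n ω a} := rfl
    have hsaa_ne : {a : ℝ | 0 ≤ a ∧ q ≤ empCdf n ω a}.Nonempty := by
      set M := Finset.univ.sup' Finset.univ_nonempty ω with hM
      refine ⟨max 0 M, le_max_left _ _, ?_⟩
      have hall : ∀ i, ω i ≤ max 0 M :=
        fun i => le_trans (Finset.le_sup' ω (Finset.mem_univ i)) (le_max_right _ _)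
      have hone : empCdf n ω (max 0 M) = 1 := by
        rw [empCdf]
        rw [Finset.sum_congr rfl fun i _ => if_pos (hall i)]
        rw [Finset.sum_const, Finset.card_univ, Fintype.card_fin, nsmul_eq_mul, mul_one]
        field_simp
      rw [hone]; exact hq1.le
    have hsaa_bdd : BddBelow {a : ℝ | 0 ≤ a ∧ q ≤ empCdf n ω a} := ⟨0, fun x hx => hx.1⟩
    have hb0 : 0 ≤ b := by rw [hb_eq]; exact le_csInf hsaa_ne fun x hx => hx.1
    have hb_le_c : b ≤ c := by rw [hb_eq]; exact csInf_le hsaa_bdd ⟨hc0, hE1⟩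
    have he_le_b : e ≤ b := by
      rw [hb_eq]
      apply le_csInf hsaa_ne
      intro x hx
      by_contra h
      push_neg at h
      have hsum : (∑ i, if ω i ≤ x then (1:ℝ) else 0) ≤ ∑ i, if ω i < e then (1:ℝ) else 0 := by
        apply Finset.sum_le_sum
        intro i _
        by_cases h1 : ω i ≤ x
        · rw [if_pos h1, if_pos (lt_of_le_of_lt h1 h)]
        · rw [if_neg h1]
          split_ifs <;> norm_num
      have hq_le : q * n ≤ (∑ i, if ω i ≤ x then (1:ℝ) else 0) := by
        have := hx.2
        rw [empCdf, le_div_iff₀ hn0'] at this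
        linarith
      linarith
    have hregret : expLoss q μ b - expLoss q μ astar ≤ ε * t := by
      rcases lt_trichotomy b astar with hlt | heq | hgt
      · have hFb_ge : q - t ≤ cdf' μ b := by
          rcases eq_or_lt_of_le he_le_b with h | h
          · rw [← h]; exact hFe
          · exact hFge b h
        have hFb_lt : cdf' μ b < q := hFbelow b hb0 hlt
        have hba : astar - b ≤ ε := by
          rcases le_or_gt (astar - ζ) b with hin | hout
          · have h1 := hkey_inv b ⟨hin, by linarith⟩
              (by rw [abs_of_nonpos (by linarith)]; linarith)
            rw [abs_of_nonpos (by linarith)] at h1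
            linarith
          · exfalso
            have hw0 : 0 ≤ astar - ζ := le_trans hb0 hout.le
            have hFw_lt : cdf' μ (astar - ζ) < q := hFbelow _ hw0 (by linarith)
            have hFw_ge : q - t ≤ cdf' μ (astar - ζ) := hFb_ge.trans (cdf'_mono hout.le)
            have h1 := hkey_inv (astar - ζ) ⟨by linarith, by linarith⟩
              (by rw [abs_of_nonpos (by linarith)]; linarith)
            rw [abs_of_nonpos (by linarith)] at h1
            have : ζ ≤ ε := by linarith
            linarith
        calc expLoss q μ b - expLoss q μ astar ≤ (astar - b) * (q - cdf' μ b) :=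
              expLoss_diff_le_left hmean hlt.le
          _ ≤ ε * t := mul_le_mul hba (by linarith) (by linarith) hε0.le
      · rw [heq]
        simp only [sub_self]
        positivity
      · have hIiob : (μ (Iio b)).toReal ≤ q + t := by
          apply measure_Iio_toReal_le (by linarith)
          intro u hu
          exact (hFltc u (lt_of_lt_of_le hu hb_le_c)).le
        have hba : b - astar ≤ ε := by linarith
        calc expLoss q μ b - expLoss q μ astar ≤ (b - astar) * ((μ (Iio b)).toReal - q) :=
              expLoss_diff_le_right hmean hgt.le
          _ ≤ (b - astar) * t := mul_le_mul_of_nonneg_left (by linarith) (by linarith)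
          _ ≤ ε * t := mul_le_mul_of_nonneg_right hba ht0.le
    calc (expLoss q μ b - expLoss q μ astar) / expLoss q μ astar
        ≤ (ε * t) / (ζ * τ) := div_le_div₀ (by positivity) hregret (by positivity) hL
      _ = _ := hRHS
  -- measurability of the good event
  have hmeasS1 : Measurable (fun ω : Fin n → ℝ => ∑ i, if ω i ≤ c then (1:ℝ) else 0) := by
    apply Finset.measurable_sum
    intro i _
    exact Measurable.ite (measurableSet_le (measurable_pi_apply i) measurable_const)
      measurable_const measurable_const
  have hmeasS2 : Measurable (fun ω : Fin n → ℝ => ∑ i, if ω i < e then (1:ℝ) else 0) := by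
    apply Finset.measurable_sum
    intro i _
    exact Measurable.ite (measurableSet_lt (measurable_pi_apply i) measurable_const)
      measurable_const measurable_const
  set A1 : Set (Fin n → ℝ) := {ω | q ≤ empCdf n ω c} with hA1_def
  set A2 : Set (Fin n → ℝ) := {ω | (∑ i, if ω i < e then (1:ℝ) else 0) < q * n} with hA2_def
  have hA1meas : MeasurableSet A1 := by
    have : Measurable (fun ω : Fin n → ℝ => empCdf n ω c) := by
      simp only [empCdf]
      exact hmeasS1.div_const _
    exact measurableSet_le measurable_const this
  have hA2meas : MeasurableSet A2 := measurableSet_lt hmeasS2 measurable_const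
  -- the exponential equals δ/2
  have hexp : Real.exp (-(2 * (n:ℝ) * t^2)) = δ/2 := by
    rw [ht2]
    rw [show -(2 * (n:ℝ) * (Real.log (2/δ) / (2*n))) = -Real.log (2/δ) by field_simp]
    rw [Real.exp_neg, Real.exp_log (by positivity), inv_div]
  -- complement bounds via Chernoff
  have hcompl1 : (iid μ n) A1ᶜ ≤ ENNReal.ofReal (δ/2) := by
    have hsubset : A1ᶜ ⊆ {ω : Fin n → ℝ | (n:ℝ) * ((μ (Ioi c)).toReal + t)
        ≤ ∑ i, (Ioi c).indicator (fun _ => (1:ℝ)) (ω i)} := by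
      intro ω hω
      simp only [hA1_def, mem_compl_iff, mem_setOf_eq, not_le] at hω
      rw [empCdf, div_lt_iff₀ hn0'] at hω
      have hsum_eq : ∑ i, (Ioi c).indicator (fun _ => (1:ℝ)) (ω i)
          = n - ∑ i, (if ω i ≤ c then (1:ℝ) else 0) := by
        rw [eq_sub_iff_add_eq, ← Finset.sum_add_distrib]
        have hterm : ∀ i : Fin n, (Ioi c).indicator (fun _ => (1:ℝ)) (ω i)
            + (if ω i ≤ c then (1:ℝ) else 0) = 1 := by
          intro i
          rw [indicator_apply]
          by_cases h : ω i ≤ c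
          · rw [if_neg (by simpa using not_lt.mpr h), if_pos h]
            norm_num
          · rw [if_pos (by simpa using not_le.mp h), if_neg h]
            norm_num
        rw [Finset.sum_congr rfl fun i _ => hterm i, Finset.sum_const, Finset.card_univ,
          Fintype.card_fin, nsmul_eq_mul, mul_one]
      have hIoic : (μ (Ioi c)).toReal ≤ 1 - (q + t) := by
        have hcc : μ (Ioi c) = 1 - μ (Iic c) := by
          rw [← compl_Iic, measure_compl measurableSet_Iic (measure_ne_top μ _), measure_univ]
        rw [hcc, ENNReal.toReal_sub_of_le prob_le_one ENNReal.one_ne_top, ENNReal.toReal_one]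
        have : q + t ≤ (μ (Iic c)).toReal := hFc
        linarith
      rw [mem_setOf_eq, hsum_eq]
      calc (n:ℝ) * ((μ (Ioi c)).toReal + t) ≤ (n:ℝ) * (1 - q) :=
            mul_le_mul_of_nonneg_left (by linarith) hn0'.le
        _ = n - q * n := by ring
        _ ≤ n - ∑ i, (if ω i ≤ c then (1:ℝ) else 0) := by linarith
    calc (iid μ n) A1ᶜ
        ≤ (iid μ n) {ω : Fin n → ℝ | (n:ℝ) * ((μ (Ioi c)).toReal + t)
            ≤ ∑ i, (Ioi c).indicator (fun _ => (1:ℝ)) (ω i)} := measure_mono hsubset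
      _ ≤ ENNReal.ofReal (Real.exp (-(2 * n * t ^ 2))) := chernoff_upper μ measurableSet_Ioi n ht0
      _ = ENNReal.ofReal (δ/2) := by rw [hexp]
  have hcompl2 : (iid μ n) A2ᶜ ≤ ENNReal.ofReal (δ/2) := by
    have hsubset : A2ᶜ ⊆ {ω : Fin n → ℝ | (n:ℝ) * ((μ (Iio e)).toReal + t)
        ≤ ∑ i, (Iio e).indicator (fun _ => (1:ℝ)) (ω i)} := by
      intro ω hω
      simp only [hA2_def, mem_compl_iff, mem_setOf_eq, not_lt] at hω
      have hsum_eq : ∑ i, (Iio e).indicator (fun _ => (1:ℝ)) (ω i)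
          = ∑ i, (if ω i < e then (1:ℝ) else 0) := by
        apply Finset.sum_congr rfl
        intro i _
        rw [indicator_apply]
        by_cases h : ω i < e
        · rw [if_pos (by simpa using h), if_pos h]
        · rw [if_neg (by simpa using h), if_neg h]
      rw [mem_setOf_eq, hsum_eq]
      calc (n:ℝ) * ((μ (Iio e)).toReal + t) ≤ (n:ℝ) * q :=
            mul_le_mul_of_nonneg_left (by linarith) hn0'.le
        _ = q * n := by ring
        _ ≤ _ := hω
    calc (iid μ n) A2ᶜ
        ≤ (iid μ n) {ω : Fin n → ℝ | (n:ℝ) * ((μ (Iio e)).toReal + t)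
            ≤ ∑ i, (Iio e).indicator (fun _ => (1:ℝ)) (ω i)} := measure_mono hsubset
      _ ≤ ENNReal.ofReal (Real.exp (-(2 * n * t ^ 2))) := chernoff_upper μ measurableSet_Iio n ht0
      _ = ENNReal.ofReal (δ/2) := by rw [hexp]
  -- assemble
  set G : Set (Fin n → ℝ) := A1 ∩ A2 with hG_def
  have hGmeas : MeasurableSet G := hA1meas.inter hA2meas
  have hGsub : G ⊆ {ω : Fin n → ℝ |
      (expLoss q μ (saa q n ω) - expLoss q μ astar) / expLoss q μ astar
        ≤ (1/(γ*ζ*τ)) * (Real.log (2/δ) / (2*n)) ^ ((β+2)/(2*β+2))} := by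
    intro ω hω
    exact hGoodTarget ω hω.1 hω.2
  have hcomplG : (iid μ n) Gᶜ ≤ ENNReal.ofReal δ := by
    have hsub : Gᶜ ⊆ A1ᶜ ∪ A2ᶜ := by
      rw [hG_def, compl_inter]
    calc (iid μ n) Gᶜ ≤ (iid μ n) (A1ᶜ ∪ A2ᶜ) := measure_mono hsub
      _ ≤ (iid μ n) A1ᶜ + (iid μ n) A2ᶜ := measure_union_le _ _
      _ ≤ ENNReal.ofReal (δ/2) + ENNReal.ofReal (δ/2) := add_le_add hcompl1 hcompl2
      _ = ENNReal.ofReal δ := by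
          rw [← ENNReal.ofReal_add (by linarith) (by linarith)]
          norm_num
  calc ENNReal.ofReal (1 - δ) = 1 - ENNReal.ofReal δ := by
        rw [ENNReal.ofReal_sub _ hδ0.le, ENNReal.ofReal_one]
    _ ≤ 1 - (iid μ n) Gᶜ := tsub_le_tsub_left hcomplG 1
    _ ≤ (iid μ n) G := by
        rw [tsub_le_iff_right, measure_add_measure_compl hGmeas, measure_univ]
    _ ≤ _ := le_trans (measure_mono hGsub) (le_of_eq rfl)
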